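/- Fix reals σ ≥ 0 and τ ≥ 0, and integers S ≥ 2, 1 ≤ p ≤ S−1. For all u, v ∈ Ō_S with u(i) ≤ v(i) for all i ∈ {1,…,S}, one has G^p(u)(i) ≤ Φ^p(v)(i) for all i ∈ {1,…,S}. -/

import Mathlib

open MeasureTheory ProbabilityTheory Filter

noncomputable section

/-- Positive part `[x]⁺ = max(x,0)`. -/
def pos (x : ℝ) : ℝ := max x 0

/-- Nondecreasing rearrangement of a finite real vector. -/
def sortVec {n : ℕ} (u : Fin n → ℝ) : Fin n → ℝ := u ∘ Tuple.sort u

/-- `u` belongs to `Ō_n`: nonnegative and nondecreasing coordinates. -/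
def OSorted {n : ℕ} (u : Fin n → ℝ) : Prop := (∀ i, 0 ≤ u i) ∧ Monotone u

/-- Two-sided iterates `θ^n`, `n ∈ ℤ`, of a measurable bijection. -/
def iterZ {Ω : Type*} [MeasurableSpace Ω] (θ : Ω ≃ᵐ Ω) : ℤ → Ω → Ω
  | Int.ofNat n => (⇑θ)^[n]
  | Int.negSucc n => (⇑θ.symm)^[n + 1]

/-- The term `σ∘θ^{-k} − Σ_{i=1}^k τ∘θ^{-i}` (here `θinv = θ⁻¹`). -/
def Zterm {Ω : Type*} (θinv : Ω → Ω) (σ τ : Ω → ℝ) (k : ℕ) (ω : Ω) : ℝ :=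
  σ (θinv^[k] ω) - ∑ i ∈ Finset.Icc 1 k, τ (θinv^[i] ω)

/-- `Z_ℓ = [sup_{k ≥ ℓ} (σ∘θ^{-k} − Σ_{i=1}^k τ∘θ^{-i})]⁺`. -/
def Zfam {Ω : Type*} (θinv : Ω → Ω) (σ τ : Ω → ℝ) (ℓ : ℕ) (ω : Ω) : ℝ :=
  pos (⨆ k : {k : ℕ // ℓ ≤ k}, Zterm θinv σ τ (k : ℕ) ω)

/-- GI/GI input: the doubly infinite sequences `(σ∘θ^n)` and `(τ∘θ^n)` are
jointly independent, and each is identically distributed. -/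
def GIGI {Ω : Type*} [MeasurableSpace Ω] (μ : Measure Ω) (θ : Ω ≃ᵐ Ω) (σ τ : Ω → ℝ) : Prop :=
  iIndepFun
    (fun x : ℤ × Bool => fun ω => if x.2 then σ (iterZ θ x.1 ω) else τ (iterZ θ x.1 ω)) μ
  ∧ (∀ n : ℤ, IdentDistrib (fun ω => σ (iterZ θ n ω)) σ μ μ)
  ∧ (∀ n : ℤ, IdentDistrib (fun ω => τ (iterZ θ n ω)) τ μ μ)

/-- The distribution of `τ` has unbounded support. -/
def UnboundedSupport {Ω : Type*} [MeasurableSpace Ω] (μ : Measure Ω) (τ : Ω → ℝ) : Prop :=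
  ∀ M : ℝ, 0 < M → 0 < μ {ω | M < τ ω}

/-- The Kiefer–Wolfowitz map `G(u) = sorted [u + σe₁ − τ𝟙]⁺`. -/
def Gmap (S : ℕ) (σ τ : ℝ) (u : Fin S → ℝ) : Fin S → ℝ :=
  sortVec fun i => pos (u i + (if (i : ℕ) = 0 then σ else 0) - τ)

/-- The map `G^p` driving the J_{p+1}SW service profile. -/
def Gp (S p : ℕ) (hS : 0 < S) (σ τ : ℝ) (u : Fin S → ℝ) : Fin S → ℝ :=
  if u ⟨0, hS⟩ = 0 then Gmap S σ τ u
  else sortVec fun i => pos (u i + (if (i : ℕ) = p then σ else 0) - τ)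

/-- The map `Γ^p`. -/
def Gamma (p : ℕ) (σ τ : ℝ) (u : Fin p → ℝ) : Fin p → ℝ := fun j =>
  if h : (j : ℕ) + 1 < p then pos (u ⟨(j : ℕ) + 1, h⟩ - τ) else pos (max (u j) σ - τ)

/-- The map `Ψ^p`. -/
def Psi (p : ℕ) (σ τ : ℝ) (u : Fin p → ℝ) : Fin p → ℝ := fun j =>
  if h : (j : ℕ) + 1 < p then pos (min (max (u j) σ) (u ⟨(j : ℕ) + 1, h⟩) - τ)
  else pos (max (u j) σ - τ)

/-- The map `Φ^p` on `Ō_S` (with `1 ≤ p < S`). -/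
def Phi (S p : ℕ) (hp : p < S) (σ τ : ℝ) (u : Fin S → ℝ) : Fin S → ℝ := fun j =>
  let ind : ℝ := if 0 < u ⟨0, Nat.lt_of_le_of_lt (Nat.zero_le p) hp⟩ then u ⟨p, hp⟩ else 0
  if h : (j : ℕ) + 1 < S then
    if (j : ℕ) < p then pos (min (max (u j) σ) (u ⟨(j : ℕ) + 1, h⟩) - τ)
    else pos (min (max (u j) (σ + ind)) (u ⟨(j : ℕ) + 1, h⟩) - τ)
  else pos (max (u j) (σ + ind) - τ)

/-- The loss-system map `H^p(u) = sorted [u + σ·1_{u(1)=0}e₁ − τ𝟙]⁺`. -/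
def Hmap (p : ℕ) (hp : 0 < p) (σ τ : ℝ) (u : Fin p → ℝ) : Fin p → ℝ :=
  sortVec fun i => pos (u i + (if (i : ℕ) = 0 ∧ u ⟨0, hp⟩ = 0 then σ else 0) - τ)

end

section

lemma pos_mono' {a b : ℝ} (h : a ≤ b) : pos a ≤ pos b := max_le_max h le_rfl

lemma sortVec_le_of_card {n : ℕ} (w : Fin n → ℝ) (j : Fin n) (c : ℝ)
    (h : (j:ℕ)+1 ≤ (Finset.univ.filter (fun i => w i ≤ c)).card) :
    sortVec w j ≤ c := by
  by_contra hc
  push_neg at hc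
  have hmono := Tuple.monotone_sort w
  have hsub : (Finset.univ.filter (fun i => w i ≤ c)) ⊆
      Finset.image (Tuple.sort w) (Finset.Iio j) := by
    intro i hi
    simp only [Finset.mem_filter] at hi
    refine Finset.mem_image.2 ⟨(Tuple.sort w)⁻¹ i, ?_, by simp⟩
    simp only [Finset.mem_Iio]
    by_contra hk
    push_neg at hk
    have h2 : sortVec w j ≤ sortVec w ((Tuple.sort w)⁻¹ i) := hmono hk
    simp only [sortVec, Function.comp_apply, Equiv.Perm.inv_def, Equiv.apply_symm_apply] at h2
    exact absurd (h2.trans hi.2) (not_le.2 hc)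
  have h3 := (Finset.card_le_card hsub).trans (Finset.card_image_le)
  have h4 : (Finset.Iio j).card = (j:ℕ) := by simp
  omega

lemma card_ge_of_inj {n : ℕ} (P : Fin n → Prop) [DecidablePred P] (m : ℕ)
    (f : Fin m → Fin n) (hf : Function.Injective f) (hP : ∀ k, P (f k)) :
    m ≤ (Finset.univ.filter P).card := by
  calc m = (Finset.univ : Finset (Fin m)).card := by simp
  _ ≤ _ := Finset.card_le_card_of_injOn f (fun k _ => by simp [hP]) hf.injOn

lemma sortVec_le_mk {n : ℕ} (w : Fin n → ℝ) (j : Fin n) (c : ℝ)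
    (g : ℕ → ℕ) (hlt : ∀ k, k ≤ (j:ℕ) → g k < n)
    (hinj : ∀ a b, a ≤ (j:ℕ) → b ≤ (j:ℕ) → g a = g b → a = b)
    (hw : ∀ k (hk : k ≤ (j:ℕ)), w ⟨g k, hlt k hk⟩ ≤ c) : sortVec w j ≤ c := by
  refine sortVec_le_of_card w j c (card_ge_of_inj _ _
    (fun k : Fin ((j:ℕ)+1) => ⟨g (k:ℕ), hlt (k:ℕ) (by omega)⟩) ?_ ?_)
  · intro a b hab
    simp only [Fin.mk.injEq] at hab
    exact Fin.ext (hinj _ _ (by omega) (by omega) hab)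
  · intro k; exact hw (k:ℕ) (by omega)

end

theorem stmt12 (σ τ : ℝ) (hσ : 0 ≤ σ) (hτ : 0 ≤ τ)
    (S p : ℕ) (hS : 2 ≤ S) (hp1 : 1 ≤ p) (hpS : p ≤ S - 1)
    (u v : Fin S → ℝ) (hu : OSorted u) (hv : OSorted v)
    (huv : ∀ i, u i ≤ v i) :
    ∀ i, Gp S p (by omega) σ τ u i ≤ Phi S p (by omega) σ τ v i := by
  intro i
  have hS0 : 0 < S := by omega
  have hpS' : p < S := by omega
  obtain ⟨hu0, humono⟩ := hu
  obtain ⟨hv0, hvmono⟩ := hv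
  have hum : ∀ (a b : ℕ) (ha : a < S) (hb : b < S), a ≤ b → u ⟨a, ha⟩ ≤ u ⟨b, hb⟩ :=
    fun a b ha hb hab => humono (by simp [Fin.le_def]; omega)
  have huvm : ∀ (a : ℕ) (ha : a < S) (b : Fin S), a ≤ (b:ℕ) → u ⟨a, ha⟩ ≤ v b :=
    fun a ha b hab => le_trans (humono (by simp [Fin.le_def]; omega)) (huv b)
  -- helper to handle the pointwise bound
  have wle : ∀ (q a : ℕ) (ha : a < S) (B : ℝ),
      (a = q → u ⟨a, ha⟩ + σ ≤ B) → (a ≠ q → u ⟨a, ha⟩ ≤ B) →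
      pos (u ⟨a, ha⟩ + (if a = q then σ else 0) - τ) ≤ pos (B - τ) := by
    intro q a ha B h1 h2
    refine pos_mono' (sub_le_sub_right ?_ _)
    by_cases hq : a = q
    · rw [if_pos hq]; exact h1 hq
    · rw [if_neg hq, add_zero]; exact h2 hq
  set ind : ℝ := if 0 < v ⟨0, Nat.lt_of_le_of_lt (Nat.zero_le p) hpS'⟩
      then v ⟨p, hpS'⟩ else 0 with hind
  have hind0 : 0 ≤ ind := by
    rw [hind]; split <;> [exact hv0 _; exact le_rfl]
  have hPhi : Phi S p hpS' σ τ v i =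
      if h : (i : ℕ) + 1 < S then
        if (i : ℕ) < p then pos (min (max (v i) σ) (v ⟨(i : ℕ) + 1, h⟩) - τ)
        else pos (min (max (v i) (σ + ind)) (v ⟨(i : ℕ) + 1, h⟩) - τ)
      else pos (max (v i) (σ + ind) - τ) := rfl
  have hGoal : Gp S p hS0 σ τ u i ≤ Phi S p hpS' σ τ v i := by
    rw [Gp, hPhi]
    by_cases h0 : u ⟨0, hS0⟩ = 0
    · rw [if_pos h0, Gmap]
      by_cases h : (i : ℕ) + 1 < S
      · rw [dif_pos h]
        have main : ∀ σ'' : ℝ, σ ≤ σ'' →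
            sortVec (fun k => pos (u k + (if (k : ℕ) = 0 then σ else 0) - τ)) i ≤
              pos (min (max (v i) σ'') (v ⟨(i : ℕ) + 1, h⟩) - τ) := by
          intro σ'' hσ''
          by_cases hcmp : σ ≤ v ⟨(i : ℕ) + 1, h⟩
          · refine sortVec_le_mk _ _ _ (fun k => k) (fun k hk => show k < S by omega)
              (fun a b _ _ hg => hg) ?_
            intro k hk
            refine wle 0 k (by omega) _ (fun hk0 => ?_) (fun hk0 => ?_)
            · have hz : u ⟨k, by omega⟩ = 0 := by
                have hk0' : k = 0 := hk0
                subst hk0'; exact h0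
              rw [hz, zero_add]
              exact le_min (le_max_of_le_right hσ'') hcmp
            · exact le_min (le_max_of_le_left (huvm _ _ i hk))
                (huvm k (by omega) ⟨(i:ℕ)+1, h⟩ (show k ≤ (i:ℕ)+1 by omega))
          · push_neg at hcmp
            refine sortVec_le_mk _ _ _ (fun k => k + 1) (fun k hk => show k + 1 < S by omega)
              (fun a b _ _ hg => by have hg' : a + 1 = b + 1 := hg; omega) ?_
            intro k hk
            refine wle 0 (k+1) (by omega) _
              (fun hk0 => absurd hk0 (by omega : ¬ k + 1 = 0)) (fun _ => ?_)
            have hb : u ⟨k+1, by omega⟩ ≤ v ⟨(i:ℕ)+1, h⟩ :=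
              huvm (k+1) (by omega) ⟨(i:ℕ)+1, h⟩ (show k+1 ≤ (i:ℕ)+1 by omega)
            exact le_min (le_trans hb (le_max_of_le_right (by linarith))) hb
        split_ifs with hip
        · exact main σ le_rfl
        · exact main (σ + ind) (by linarith)
      · rw [dif_neg h]
        refine sortVec_le_mk _ _ _ (fun k => k) (fun k hk => show k < S by omega)
          (fun a b _ _ hg => hg) ?_
        intro k hk
        refine wle 0 k (by omega) _ (fun hk0 => ?_) (fun hk0 => ?_)
        · have hz : u ⟨k, by omega⟩ = 0 := by
            have hk0' : k = 0 := hk0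
            subst hk0'; exact h0
          rw [hz, zero_add]
          exact le_max_of_le_right (by linarith)
        · exact le_max_of_le_left (huvm _ _ i hk)
    · rw [if_neg h0]
      have hv0pos : 0 < v ⟨0, Nat.lt_of_le_of_lt (Nat.zero_le p) hpS'⟩ :=
        lt_of_lt_of_le (lt_of_le_of_ne (hu0 _) (Ne.symm h0)) (huv _)
      have hindv : ind = v ⟨p, hpS'⟩ := by rw [hind, if_pos hv0pos]
      have hup : u ⟨p, hpS'⟩ ≤ v ⟨p, hpS'⟩ := huv _
      by_cases h : (i : ℕ) + 1 < S
      · rw [dif_pos h]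
        by_cases hip : (i : ℕ) < p
        · rw [if_pos hip]
          refine sortVec_le_mk _ _ _ (fun k => k) (fun k hk => show k < S by omega)
            (fun a b _ _ hg => hg) ?_
          intro k hk
          refine wle p k (by omega) _
            (fun hkp => absurd hkp (by omega : ¬ k = p)) (fun hkp => ?_)
          exact le_min (le_max_of_le_left (huvm _ _ i hk))
            (huvm k (by omega) ⟨(i:ℕ)+1, h⟩ (show k ≤ (i:ℕ)+1 by omega))
        · rw [if_neg hip]
          push_neg at hip
          by_cases hcmp : u ⟨p, hpS'⟩ + σ ≤ v ⟨(i : ℕ) + 1, h⟩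
          · refine sortVec_le_mk _ _ _ (fun k => k) (fun k hk => show k < S by omega)
              (fun a b _ _ hg => hg) ?_
            intro k hk
            refine wle p k (by omega) _ (fun hkp => ?_) (fun hkp => ?_)
            · have hkp' : k = p := hkp
              have he : u ⟨k, by omega⟩ = u ⟨p, hpS'⟩ := by subst hkp'; rfl
              rw [he]
              refine le_min (le_max_of_le_right ?_) hcmp
              rw [hindv]; linarith
            · exact le_min (le_max_of_le_left (huvm _ _ i hk))
                (huvm k (by omega) ⟨(i:ℕ)+1, h⟩ (show k ≤ (i:ℕ)+1 by omega))
          · push_neg at hcmp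
            refine sortVec_le_mk _ _ _ (fun k => if k < p then k else k + 1)
              (fun k hk => show (if k < p then k else k + 1) < S by split <;> omega)
              (fun a b _ _ hg => by
                have hg' : (if a < p then a else a + 1) = (if b < p then b else b + 1) := hg
                split_ifs at hg' <;> omega) ?_
            intro k hk
            refine wle p (if k < p then k else k + 1)
              (show (if k < p then k else k + 1) < S by split <;> omega) _
              (fun hkp => absurd hkp
                (show ¬ (if k < p then k else k + 1) = p by split <;> omega)) (fun _ => ?_)
            have hb : u ⟨if k < p then k else k + 1, by split <;> omega⟩ ≤
                v ⟨(i:ℕ)+1, h⟩ :=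
              huvm _ (by split <;> omega) ⟨(i:ℕ)+1, h⟩
                (show (if k < p then k else k + 1) ≤ (i:ℕ)+1 by split <;> omega)
            refine le_min (le_trans hb (le_max_of_le_right ?_)) hb
            rw [hindv]; linarith
      · rw [dif_neg h]
        refine sortVec_le_mk _ _ _ (fun k => k) (fun k hk => show k < S by omega)
          (fun a b _ _ hg => hg) ?_
        intro k hk
        refine wle p k (by omega) _ (fun hkp => ?_) (fun hkp => ?_)
        · have hkp' : k = p := hkp
          have he : u ⟨k, by omega⟩ = u ⟨p, hpS'⟩ := by subst hkp'; rfl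
          rw [he]
          refine le_max_of_le_right ?_
          rw [hindv]; linarith
        · exact le_max_of_le_left (huvm _ _ i hk)
  exact hGoal
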